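/- Signals partition SIMD ensembles by region: in any execution of the credit protocol where the sender emits the elements of regions R₀, …, R_b separated by signals, and the receiver processes data in ensembles of size at most min(w, current credit counter when a signal is pending), no ensemble ever contains elements from two different regions. -/
import Mathlib


/-- State of the credit protocol where the sender emits the elements of
regions `R₀, R₁, …` separated by signals.  `cur` is the index of the region
currently being emitted; `Q` holds the region tags of queued data items;
`S` is the queue of signal credits; `c` the receiver's credit counter;
`k` the items emitted since the last signal; `batches` records the SIMD
ensembles (as lists of region tags) consumed so far. -/
structure BState where
  cur : ℕ
  Q : List ℕ
  S : List ℕ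
  c : ℕ
  k : ℕ
  batches : List (List ℕ)

/-- Transitions, parameterized by the SIMD width `w`.  The receiver consumes
data in batches (ensembles) of size at most `w`, additionally bounded by the
current credit counter whenever a signal is pending. -/
inductive BStep (w : ℕ) : BState → BState → Prop
  | emitData (s : BState) :
      BStep w s { s with Q := s.Q ++ [s.cur], k := s.k + 1 }
  | emitSignal (s : BState) :
      BStep w s { s with
        S := s.S ++ [if s.S = [] then s.Q.length else s.k],
        k := 0, cur := s.cur + 1 }
  | consumeBatch (s : BState) (batch Q' : List ℕ)
      (hQ : s.Q = batch ++ Q') (hne : 0 < batch.length)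
      (hw : batch.length ≤ w)
      (hcredit : s.S ≠ [] → batch.length ≤ s.c) :
      BStep w s { s with Q := Q', batches := s.batches ++ [batch],
                         c := if s.S = [] then s.c else s.c - batch.length }
  | transfer (s : BState) (h : ℕ) (S' : List ℕ)
      (hS : s.S = h :: S') (hc : s.c = 0) (hh : 0 < h) :
      BStep w s { s with S := 0 :: S', c := h }
  | consumeSignal (s : BState) (S' : List ℕ)
      (hS : s.S = 0 :: S') (hc : s.c = 0) :
      BStep w s { s with S := S' }

/-- Initial state. -/
def initB : BState := ⟨0, [], [], 0, 0, []⟩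

/-- `segs t L Q k` : Q splits into segments whose lengths are given by `L`,
with constant tags `t, t+1, …`, followed by a final segment of tag
`t + L.length` and length `k`. -/
def segs : ℕ → List ℕ → List ℕ → ℕ → Prop
  | t, [], Q, k => (∀ x ∈ Q, x = t) ∧ Q.length = k
  | t, h :: L, Q, k =>
      ∃ P Q', Q = P ++ Q' ∧ P.length = h ∧ (∀ x ∈ P, x = t) ∧ segs (t+1) L Q' k

lemma segs_push (t : ℕ) (L : List ℕ) (Q : List ℕ) (k : ℕ)
    (h : segs t L Q k) : segs t L (Q ++ [t + L.length]) (k + 1) := by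
  induction L generalizing t Q with
  | nil =>
    obtain ⟨h1, h2⟩ := h
    refine ⟨?_, by simp [h2]⟩
    intro x hx
    rcases List.mem_append.1 hx with hx | hx
    · exact h1 x hx
    · simp at hx; simpa using hx
  | cons a L ih =>
    obtain ⟨P, Q', rfl, hP, hPt, hrest⟩ := h
    refine ⟨P, Q' ++ [t + (a :: L).length], by simp, hP, hPt, ?_⟩
    have := ih (t+1) Q' hrest
    simpa [Nat.add_comm, Nat.add_assoc, Nat.add_left_comm] using this

lemma segs_snoc (t : ℕ) (L : List ℕ) (Q : List ℕ) (k : ℕ)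
    (h : segs t L Q k) : segs t (L ++ [k]) Q 0 := by
  induction L generalizing t Q with
  | nil =>
    obtain ⟨h1, h2⟩ := h
    exact ⟨Q, [], by simp, h2, h1, by simp [segs]⟩
  | cons a L ih =>
    obtain ⟨P, Q', rfl, hP, hPt, hrest⟩ := h
    exact ⟨P, Q', rfl, hP, hPt, ih (t+1) Q' hrest⟩

def BInv (s : BState) : Prop :=
  s.S.length ≤ s.cur ∧
  (s.S = [] → s.c = 0 ∧ ∀ x ∈ s.Q, x = s.cur) ∧
  (∀ h L, s.S = h :: L → segs (s.cur - s.S.length) ((s.c + h) :: L) s.Q s.k) ∧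
  (∀ b ∈ s.batches, ∀ x ∈ b, ∀ y ∈ b, x = y)

lemma BInv_init : BInv initB := by
  refine ⟨by simp [initB], by simp [initB], ?_, by simp [initB]⟩
  intro h L hS; simp [initB] at hS

lemma BInv_step {w : ℕ} {s s' : BState} (hstep : BStep w s s') (hinv : BInv s) :
    BInv s' := by
  obtain ⟨hlen, hempty, hseg, hbat⟩ := hinv
  cases hstep with
  | emitData =>
    refine ⟨hlen, ?_, ?_, hbat⟩
    · intro hS
      obtain ⟨hc, hQ⟩ := hempty hS
      refine ⟨hc, ?_⟩
      intro x hx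
      rcases List.mem_append.1 hx with hx | hx
      · exact hQ x hx
      · simpa using hx
    · intro h L hS
      have h1 := hseg h L hS
      have h2 := segs_push _ _ _ _ h1
      have ht : s.cur - s.S.length + ((s.c + h) :: L).length = s.cur := by
        have : s.S.length = L.length + 1 := by rw [hS]; simp
        simp only [List.length_cons]
        omega
      rw [ht] at h2
      exact h2
  | emitSignal =>
    by_cases hE : s.S = []
    · obtain ⟨hc0, hQ⟩ := hempty hE
      refine ⟨by simp [hE], by simp, ?_, hbat⟩
      intro h L hS
      simp only [hE, List.nil_append, reduceIte] at hS ⊢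
      injection hS with e1 e2
      subst e1; subst e2
      simp only [List.length_singleton, Nat.add_sub_cancel]
      exact ⟨s.Q, [], by simp, by omega, hQ, by simp [segs]⟩
    · obtain ⟨h₀, L₀, hS₀⟩ := List.exists_cons_of_ne_nil hE
      refine ⟨by simp; omega, by simp, ?_, hbat⟩
      intro h L hS
      have h2 := segs_snoc _ _ _ _ (hseg h₀ L₀ hS₀)
      simp only [hS₀, if_neg (List.cons_ne_nil h₀ L₀), List.cons_append] at hS ⊢
      injection hS with e1 e2
      subst e1; subst e2
      have e : s.cur + 1 - (h₀ :: (L₀ ++ [s.k])).length = s.cur - s.S.length := by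
        have := hlen
        rw [hS₀] at this
        simp only [List.length_cons] at this
        rw [hS₀]
        simp only [List.length_cons, List.length_append, List.length_singleton, List.length_nil]
        omega
      rw [e]
      simpa using h2
  | consumeBatch batch Q' hQ hne hw hcredit =>
    by_cases hE : s.S = []
    · obtain ⟨hc, hQt⟩ := hempty hE
      refine ⟨hlen, ?_, ?_, ?_⟩
      · intro _
        refine ⟨by simp [hE, hc], ?_⟩
        intro x hx
        exact hQt x (by rw [hQ]; exact List.mem_append_right _ hx)
      · intro h L hS; simp [hE] at hS
      · intro b hb x hx y hy
        simp only at hb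
        rcases List.mem_append.1 hb with hb | hb
        · exact hbat b hb x hx y hy
        · simp at hb; subst hb
          have hxc := hQt x (by rw [hQ]; exact List.mem_append_left _ hx)
          have hyc := hQt y (by rw [hQ]; exact List.mem_append_left _ hy)
          rw [hxc, hyc]
    · obtain ⟨h₀, L₀, hS₀⟩ := List.exists_cons_of_ne_nil hE
      have h1 := hseg h₀ L₀ hS₀
      obtain ⟨P, Qr, hPQ, hPlen, hPt, hrest⟩ := h1
      have hbc : batch.length ≤ s.c := hcredit hE
      have hbP : batch.length ≤ P.length := by omega
      have e : batch ++ Q' = P ++ Qr := by rw [← hQ, hPQ]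
      have hbatch : batch = P.take batch.length := by
        have h3 : (batch ++ Q').take batch.length = (P ++ Qr).take batch.length := by
          rw [e]
        rwa [List.take_left, List.take_append_of_le_length hbP] at h3
      have hQ' : Q' = P.drop batch.length ++ Qr := by
        have h3 : (batch ++ Q').drop batch.length = (P ++ Qr).drop batch.length := by
          rw [e]
        rwa [List.drop_left, List.drop_append_of_le_length hbP] at h3
      have hbt : ∀ x ∈ batch, x = s.cur - s.S.length := by
        intro x hx
        exact hPt x (by rw [hbatch] at hx; exact List.mem_of_mem_take hx)
      refine ⟨hlen, ?_, ?_, ?_⟩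
      · intro hS; simp only at hS; exact absurd hS hE
      · intro h L hS
        simp only [if_neg hE] at hS ⊢
        rw [hS₀] at hS
        injection hS with e1 e2
        subst e1; subst e2
        refine ⟨P.drop batch.length, Qr, hQ', by simp [hPlen]; omega, ?_, hrest⟩
        intro x hx
        exact hPt x (List.mem_of_mem_drop hx)
      · intro b hb x hx y hy
        simp only at hb
        rcases List.mem_append.1 hb with hb | hb
        · exact hbat b hb x hx y hy
        · simp at hb; subst hb
          rw [hbt x hx, hbt y hy]
  | transfer h S' hS hc hh =>
    have h1 := hseg h S' hS
    rw [hc, hS] at h1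
    refine ⟨by rw [hS] at hlen; simpa using hlen, by simp, ?_, hbat⟩
    intro h' L hSL
    simp only at hSL
    injection hSL with e1 e2
    subst e1; subst e2
    simp only [List.length_cons] at h1 ⊢
    have : h + 0 = 0 + h := by omega
    rw [this]
    exact h1
  | consumeSignal S' hS hc =>
    have h1 := hseg 0 S' hS
    rw [hc] at h1
    obtain ⟨P, Qr, hPQ, hPlen, _, hrest⟩ := h1
    have hP : P = [] := List.length_eq_zero_iff.1 (by simpa using hPlen)
    subst hP
    simp only [List.nil_append] at hPQ
    subst hPQ
    have hlen' : s.S.length = S'.length + 1 := by rw [hS]; simp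
    refine ⟨by simp only; omega, ?_, ?_, hbat⟩
    · intro hS'
      subst hS'
      obtain ⟨hall, _⟩ := hrest
      refine ⟨hc, ?_⟩
      intro x hx
      have := hall x hx
      simp only at *
      omega
    · intro h L hSL
      simp only at hSL
      subst hSL
      obtain ⟨P₁, Q₁, hPQ₁, hP₁, hPt₁, hrest₁⟩ := hrest
      refine ⟨P₁, Q₁, hPQ₁, by simp [hP₁, hc], ?_, ?_⟩
      · intro x hx
        have := hPt₁ x hx
        simp only at *
        omega
      · convert hrest₁ using 1
        simp only at *
        omega

/-- signals partition SIMD ensembles by region: in any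
reachable state of the protocol, every consumed ensemble contains elements of
a single region only — no batch mixes elements from two different regions. -/
theorem batches_single_region (w : ℕ) (s : BState)
    (hreach : Relation.ReflTransGen (BStep w) initB s) :
    ∀ batch ∈ s.batches, ∀ x ∈ batch, ∀ y ∈ batch, x = y := by
  have hinv : BInv s := by
    induction hreach with
    | refl => exact BInv_init
    | tail _ step ih => exact BInv_step step ih
  exact hinv.2.2.2
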